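/- Let d ≥ 2 and m ≥ 1 with (d, m) ≠ (2, 1), and let ω ∈ Ω_{d,m}. Then for all ξ, η ∈ X^ℕ with ξ ≠ η, the stabilizer subgroups Stab_{G_ω}(ξ) and Stab_{G_ω}(η) of the spinal group G_ω are distinct; equivalently, the map sending a boundary point to its rooted, directed, labeled Schreier graph is injective on X^ℕ. -/

import Mathlib

open MeasureTheory

noncomputable section

/-- The boundary of the `d`-regular rooted tree: infinite words over `X = {0,…,d-1}`,
identified with `ZMod d`. -/
abbrev Bd (d : ℕ) : Type := ℕ → ZMod d
/-- The rooted automorphism `a`: adds 1 (mod `d`) to the first letter. -/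
def aMap (d : ℕ) (ξ : Bd d) : Bd d := fun n => if n = 0 then ξ 0 + 1 else ξ n

open scoped Classical in
/-- The spinal automorphism `b_ω`: if `ξ` starts with `(d-1)^r 0`, add `ω r b` to the
letter at position `r + 1`; otherwise fix `ξ`. -/
def bMap (d m : ℕ) (ω : ℕ → ((Fin m → ZMod d) →+ ZMod d)) (b : Fin m → ZMod d)
    (ξ : Bd d) : Bd d := fun n =>
  if n ≠ 0 ∧ (∀ i, i < n - 1 → ξ i = (d : ZMod d) - 1) ∧ ξ (n - 1) = 0 then
    ξ n + ω (n - 1) b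
  else ξ n
/-- The spinal generating set `S = {a^j : 1 ≤ j ≤ d-1} ∪ {b_ω : b ∈ B ∖ {0}}`,
as a set of self-maps of the boundary. -/
def genSet (d m : ℕ) (ω : ℕ → ((Fin m → ZMod d) →+ ZMod d)) : Set (Bd d → Bd d) :=
  {f | ∃ j, 1 ≤ j ∧ j ≤ d - 1 ∧ f = (aMap d)^[j]} ∪ {f | ∃ b, b ≠ 0 ∧ f = bMap d m ω b}
/-- Membership in `Ω_{d,m}`: all `ω_n` are surjective and `⋂_{j ≥ i} ker ω_j = {0}`
for every `i ≥ 0`. -/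
def InOmega (d m : ℕ) (ω : ℕ → ((Fin m → ZMod d) →+ ZMod d)) : Prop :=
  (∀ n, Function.Surjective (ω n)) ∧
  ∀ i : ℕ, ∀ b : Fin m → ZMod d, (∀ j, i ≤ j → ω j b = 0) → b = 0

/-- The spinal generators, as permutations of the boundary. -/
def genPerm (d m : ℕ) (ω : ℕ → ((Fin m → ZMod d) →+ ZMod d)) : Set (Equiv.Perm (Bd d)) :=
  {π | ⇑π ∈ genSet d m ω}

/-- The spinal group `G_ω`, the group of permutations of the boundary generated by the
spinal generating set `S`. -/
def spinalGroup (d m : ℕ) (ω : ℕ → ((Fin m → ZMod d) →+ ZMod d)) :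
    Subgroup (Equiv.Perm (Bd d)) :=
  Subgroup.closure (genPerm d m ω)

theorem Equiv.Perm.apply_inv_self {α : Type*} (f : Equiv.Perm α) (x : α) : f (f⁻¹ x) = x :=
  Equiv.apply_symm_apply f x

theorem Equiv.Perm.inv_apply_self {α : Type*} (f : Equiv.Perm α) (x : α) : f⁻¹ (f x) = x :=
  Equiv.symm_apply_apply f x

namespace SpinalAux

open scoped Classical

variable {d m : ℕ}

abbrev W (d m : ℕ) := ℕ → ((Fin m → ZMod d) →+ ZMod d)

def sh (ω : W d m) : W d m := fun n => ω (n + 1)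

def tl (ζ : Bd d) : Bd d := fun k => ζ (k + 1)

lemma aMap_zero (ζ : Bd d) : aMap d ζ 0 = ζ 0 + 1 := by simp [aMap]

lemma aMap_succ (ζ : Bd d) (k : ℕ) : aMap d ζ (k + 1) = ζ (k + 1) := by simp [aMap]

lemma aIter_zero (t : ℕ) (ζ : Bd d) : (aMap d)^[t] ζ 0 = ζ 0 + (t : ZMod d) := by
  induction t generalizing ζ with
  | zero => simp
  | succ t ih =>
      rw [Function.iterate_succ_apply, ih, aMap_zero]
      push_cast; ring

lemma aIter_succ (t : ℕ) (ζ : Bd d) (k : ℕ) : (aMap d)^[t] ζ (k + 1) = ζ (k + 1) := by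
  induction t generalizing ζ with
  | zero => simp
  | succ t ih => rw [Function.iterate_succ_apply, ih, aMap_succ]

lemma aIter_d (ζ : Bd d) : (aMap d)^[d] ζ = ζ := by
  funext n
  cases n with
  | zero => rw [aIter_zero, ZMod.natCast_self, add_zero]
  | succ k => rw [aIter_succ]

def aPerm (d : ℕ) (hd : 2 ≤ d) : Equiv.Perm (Bd d) where
  toFun := aMap d
  invFun := (aMap d)^[d - 1]
  left_inv := fun ζ => by
    have h : (d - 1).succ = d := by omega
    have h2 := Function.iterate_succ_apply (aMap d) (d - 1) ζ
    rw [h] at h2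
    rw [← h2, aIter_d]
  right_inv := fun ζ => by
    have h : (d - 1).succ = d := by omega
    have h2 := Function.iterate_succ_apply' (aMap d) (d - 1) ζ
    rw [h] at h2
    rw [← h2, aIter_d]

lemma coe_aPerm (hd : 2 ≤ d) : ⇑(aPerm d hd) = aMap d := rfl

lemma aPow_apply (hd : 2 ≤ d) (t : ℕ) (ζ : Bd d) :
    (aPerm d hd ^ t) ζ = (aMap d)^[t] ζ := congrFun (Equiv.Perm.coe_pow _ _) ζ

lemma neg_one_ne_zero' (hd : 2 ≤ d) : (d : ZMod d) - 1 ≠ 0 := by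
  haveI : Fact (1 < d) := ⟨by omega⟩
  rw [ZMod.natCast_self, zero_sub]
  exact neg_ne_zero.mpr one_ne_zero

lemma val_cast' (hd : 2 ≤ d) (x : ZMod d) : ((x.val : ℕ) : ZMod d) = x := by
  haveI : NeZero d := ⟨by omega⟩
  exact ZMod.natCast_rightInverse x

def Spine (d : ℕ) (ζ : Bd d) (r : ℕ) : Prop :=
  (∀ i, i < r → ζ i = (d : ZMod d) - 1) ∧ ζ r = 0

lemma bMap_zero_apply (ω : W d m) (b) (ζ : Bd d) : bMap d m ω b ζ 0 = ζ 0 := by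
  simp [bMap]

lemma bMap_succ_apply (ω : W d m) (b) (ζ : Bd d) (k : ℕ) :
    bMap d m ω b ζ (k + 1) = if Spine d ζ k then ζ (k + 1) + ω k b else ζ (k + 1) := by
  simp only [bMap, Nat.add_sub_cancel, ne_eq]
  by_cases h : Spine d ζ k
  · rw [if_pos ⟨Nat.succ_ne_zero k, h.1, h.2⟩, if_pos h]
  · rw [if_neg (fun hc => h ⟨hc.2.1, hc.2.2⟩), if_neg h]

lemma bMap_agree_of_spine (hd : 2 ≤ d) (ω : W d m) (b) {ζ : Bd d} {k : ℕ}
    (h : Spine d ζ k) : ∀ i, i ≤ k → bMap d m ω b ζ i = ζ i := by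
  intro i hi
  cases i with
  | zero => exact bMap_zero_apply ω b ζ
  | succ j =>
      rw [bMap_succ_apply]
      have hns : ¬ Spine d ζ j := by
        intro hs
        have h1 : ζ j = (d : ZMod d) - 1 := h.1 j (by omega)
        have h2 : ζ j = 0 := hs.2
        exact neg_one_ne_zero' hd (h1.symm.trans h2)
      rw [if_neg hns]

lemma bMap_agree_of_spine' (hd : 2 ≤ d) (ω : W d m) (b) {ζ : Bd d} {k : ℕ}
    (h : Spine d (bMap d m ω b ζ) k) : ∀ i, i ≤ k → bMap d m ω b ζ i = ζ i := by
  intro i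
  induction i using Nat.strong_induction_on with
  | _ i IH =>
    intro hi
    cases i with
    | zero => exact bMap_zero_apply ω b ζ
    | succ j =>
      rw [bMap_succ_apply]
      have hns : ¬ Spine d ζ j := by
        intro hs
        have hj : bMap d m ω b ζ j = ζ j := IH j (by omega) (by omega)
        have hk := h.1 j (by omega)
        rw [hj, hs.2] at hk
        exact neg_one_ne_zero' hd hk.symm
      rw [if_neg hns]

lemma spine_bMap_iff (hd : 2 ≤ d) (ω : W d m) (b) (ζ : Bd d) (k : ℕ) :
    Spine d (bMap d m ω b ζ) k ↔ Spine d ζ k := by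
  constructor
  · intro h
    have hag := bMap_agree_of_spine' hd ω b h
    exact ⟨fun i hi => by rw [← hag i (le_of_lt hi)]; exact h.1 i hi,
           by rw [← hag k le_rfl]; exact h.2⟩
  · intro h
    have hag := bMap_agree_of_spine hd ω b h
    exact ⟨fun i hi => by rw [hag i (le_of_lt hi)]; exact h.1 i hi,
           by rw [hag k le_rfl]; exact h.2⟩

lemma bMap_bMap (hd : 2 ≤ d) (ω : W d m) (b b') (ζ : Bd d) :
    bMap d m ω b (bMap d m ω b' ζ) = bMap d m ω (b + b') ζ := by
  funext n
  cases n with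
  | zero => rw [bMap_zero_apply, bMap_zero_apply, bMap_zero_apply]
  | succ k =>
    rw [bMap_succ_apply, bMap_succ_apply, bMap_succ_apply]
    by_cases h : Spine d ζ k
    · rw [if_pos ((spine_bMap_iff hd ω b' ζ k).mpr h), if_pos h, if_pos h, map_add]
      ring
    · rw [if_neg (fun hh => h ((spine_bMap_iff hd ω b' ζ k).mp hh)), if_neg h, if_neg h]

lemma bMap_zero_b (ω : W d m) (ζ : Bd d) : bMap d m ω 0 ζ = ζ := by
  funext n
  unfold bMap
  split
  · rw [map_zero, add_zero]
  · rfl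

def bPerm (hd : 2 ≤ d) (ω : W d m) (b : Fin m → ZMod d) : Equiv.Perm (Bd d) where
  toFun := bMap d m ω b
  invFun := bMap d m ω (-b)
  left_inv := fun ζ => by rw [bMap_bMap hd, neg_add_cancel, bMap_zero_b]
  right_inv := fun ζ => by rw [bMap_bMap hd, add_neg_cancel, bMap_zero_b]

lemma coe_bPerm (hd : 2 ≤ d) (ω : W d m) (b) : ⇑(bPerm hd ω b) = bMap d m ω b := rfl

lemma aPerm_mem (hd : 2 ≤ d) (ω : W d m) : aPerm d hd ∈ spinalGroup d m ω :=
  Subgroup.subset_closure (Or.inl ⟨1, le_rfl, by omega, (Function.iterate_one (aMap d)).symm⟩)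

lemma aPow_mem (hd : 2 ≤ d) (ω : W d m) (t : ℕ) : aPerm d hd ^ t ∈ spinalGroup d m ω :=
  pow_mem (aPerm_mem hd ω) t

lemma bPerm_mem (hd : 2 ≤ d) (ω : W d m) (b) : bPerm hd ω b ∈ spinalGroup d m ω := by
  by_cases hb : b = 0
  · have h1 : bPerm hd ω b = 1 := by
      apply Equiv.ext
      intro ζ
      show bMap d m ω b ζ = ζ
      rw [hb, bMap_zero_b]
    rw [h1]; exact one_mem _
  · exact Subgroup.subset_closure (Or.inr ⟨b, hb, rfl⟩)

lemma coord0 (hd : 2 ≤ d) (ω : W d m) {g : Equiv.Perm (Bd d)}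
    (hg : g ∈ spinalGroup d m ω) : ∃ c : ZMod d, ∀ ζ : Bd d, g ζ 0 = ζ 0 + c := by
  have hg' : g ∈ Subgroup.closure (genPerm d m ω) := hg
  clear hg
  induction hg' using Subgroup.closure_induction with
  | mem x hx =>
      rcases hx with ⟨j, _, _, hf⟩ | ⟨b, _, hf⟩
      · exact ⟨(j : ZMod d), fun ζ => by
          rw [show x ζ = (aMap d)^[j] ζ from congrFun hf ζ]; exact aIter_zero j ζ⟩
      · exact ⟨0, fun ζ => by
          rw [show x ζ = bMap d m ω b ζ from congrFun hf ζ, add_zero]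
          exact bMap_zero_apply ω b ζ⟩
  | one => exact ⟨0, fun ζ => by simp⟩
  | mul x y hx hy ihx ihy =>
      obtain ⟨cx, hcx⟩ := ihx
      obtain ⟨cy, hcy⟩ := ihy
      exact ⟨cy + cx, fun ζ => by
        rw [Equiv.Perm.mul_apply, hcx, hcy, add_assoc]⟩
  | inv x hx ihx =>
      obtain ⟨c, hc⟩ := ihx
      refine ⟨-c, fun ζ => ?_⟩
      have h1 := hc (x⁻¹ ζ)
      rw [Equiv.Perm.apply_inv_self] at h1
      rw [eq_sub_of_add_eq h1.symm]
      ring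

lemma spine_tl (hd : 2 ≤ d) {ζ : Bd d} (hζ0 : ζ 0 = (d : ZMod d) - 1) (k : ℕ) :
    Spine d ζ (k + 1) ↔ Spine d (tl ζ) k := by
  constructor
  · exact fun h => ⟨fun i hi => h.1 (i + 1) (by omega), h.2⟩
  · intro h
    refine ⟨fun i hi => ?_, h.2⟩
    cases i with
    | zero => exact hζ0
    | succ i' => exact h.1 i' (by omega)

lemma bMap_sect (hd : 2 ≤ d) (ω : W d m) (b) {ζ : Bd d}
    (hζ0 : ζ 0 = (d : ZMod d) - 1) (k : ℕ) :
    bMap d m ω b ζ (k + 1) = bMap d m (sh ω) b (tl ζ) k := by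
  cases k with
  | zero =>
      rw [bMap_succ_apply, bMap_zero_apply]
      have hns : ¬ Spine d ζ 0 := fun hs => neg_one_ne_zero' hd (hζ0.symm.trans hs.2)
      rw [if_neg hns]
      rfl
  | succ k' =>
      rw [bMap_succ_apply, bMap_succ_apply]
      by_cases h : Spine d (tl ζ) k'
      · rw [if_pos ((spine_tl hd hζ0 k').mpr h), if_pos h]
        rfl
      · rw [if_neg (fun hh => h ((spine_tl hd hζ0 k').mp hh)), if_neg h]
        rfl

lemma aPerm_inv_zero (hd : 2 ≤ d) (u : Bd d) : (aPerm d hd)⁻¹ u 0 = u 0 - 1 := by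
  have h1 : aMap d ((aPerm d hd)⁻¹ u) = u := Equiv.Perm.apply_inv_self (aPerm d hd) u
  have h2 := congrFun h1 0
  rw [aMap_zero] at h2
  rw [eq_sub_of_add_eq h2]

lemma aPerm_inv_succ (hd : 2 ≤ d) (u : Bd d) (k : ℕ) :
    (aPerm d hd)⁻¹ u (k + 1) = u (k + 1) := by
  have h1 : aMap d ((aPerm d hd)⁻¹ u) = u := Equiv.Perm.apply_inv_self (aPerm d hd) u
  have h2 := congrFun h1 (k + 1)
  rw [aMap_succ] at h2
  exact h2

lemma lift_lemma (hd : 2 ≤ d) (ω : W d m) (hsurj : Function.Surjective (ω 0))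
    {h : Equiv.Perm (Bd d)} (hh : h ∈ spinalGroup d m (sh ω)) :
    ∃ g, g ∈ spinalGroup d m ω ∧ (∀ ζ : Bd d, g ζ 0 = ζ 0) ∧
      (∀ ζ : Bd d, ζ 0 = (d : ZMod d) - 1 → ∀ k, g ζ (k + 1) = h (tl ζ) k) := by
  have hh' : h ∈ Subgroup.closure (genPerm d m (sh ω)) := hh
  clear hh
  induction hh' using Subgroup.closure_induction with
  | mem x hx =>
      rcases hx with ⟨j, hj1, hj2, hf⟩ | ⟨b, _, hf⟩
      · -- a-type generator of the shifted group
        obtain ⟨c, hc⟩ := hsurj ((j : ℕ) : ZMod d)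
        refine ⟨(aPerm d hd)⁻¹ * bPerm hd ω c * aPerm d hd,
          mul_mem (mul_mem (inv_mem (aPerm_mem hd ω)) (bPerm_mem hd ω c)) (aPerm_mem hd ω),
          ?_, ?_⟩
        · intro ζ
          rw [Equiv.Perm.mul_apply, Equiv.Perm.mul_apply, aPerm_inv_zero]
          show bMap d m ω c (aMap d ζ) 0 - 1 = ζ 0
          rw [bMap_zero_apply, aMap_zero, add_sub_cancel_right]
        · intro ζ hζ0 k
          have haζ0 : aMap d ζ 0 = 0 := by
            rw [aMap_zero, hζ0, sub_add_cancel, ZMod.natCast_self]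
          rw [Equiv.Perm.mul_apply, Equiv.Perm.mul_apply, aPerm_inv_succ]
          show bMap d m ω c (aMap d ζ) (k + 1) = x (tl ζ) k
          rw [show x (tl ζ) = (aMap d)^[j] (tl ζ) from congrFun hf (tl ζ)]
          rw [bMap_succ_apply]
          cases k with
          | zero =>
              rw [if_pos ⟨fun i hi => absurd hi (by omega), haζ0⟩]
              rw [aMap_succ, aIter_zero, hc]
              rfl
          | succ k' =>
              have hns : ¬ Spine d (aMap d ζ) (k' + 1) := by
                intro hs
                have h1 := hs.1 0 (by omega)
                rw [haζ0] at h1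
                exact neg_one_ne_zero' hd h1.symm
              rw [if_neg hns, aMap_succ, aIter_succ]
              rfl
      · -- b-type generator of the shifted group
        refine ⟨bPerm hd ω b, bPerm_mem hd ω b, fun ζ => bMap_zero_apply ω b ζ, ?_⟩
        intro ζ hζ0 k
        show bMap d m ω b ζ (k + 1) = x (tl ζ) k
        rw [show x (tl ζ) = bMap d m (sh ω) b (tl ζ) from congrFun hf (tl ζ)]
        exact bMap_sect hd ω b hζ0 k
  | one =>
      exact ⟨1, one_mem _, fun ζ => rfl, fun ζ _ k => rfl⟩
  | mul x y hx hy ihx ihy =>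
      obtain ⟨gx, gxm, gx0, gxs⟩ := ihx
      obtain ⟨gy, gym, gy0, gys⟩ := ihy
      refine ⟨gx * gy, mul_mem gxm gym, ?_, ?_⟩
      · intro ζ; rw [Equiv.Perm.mul_apply, gx0, gy0]
      · intro ζ hζ0 k
        have hgy0 : gy ζ 0 = (d : ZMod d) - 1 := by rw [gy0, hζ0]
        rw [Equiv.Perm.mul_apply, gxs (gy ζ) hgy0 k]
        have htl : tl (gy ζ) = y (tl ζ) := funext (fun k' => gys ζ hζ0 k')
        rw [htl, Equiv.Perm.mul_apply]
  | inv x hx ihx =>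
      obtain ⟨g, gm, g0, gs⟩ := ihx
      refine ⟨g⁻¹, inv_mem gm, ?_, ?_⟩
      · intro ζ
        have h1 := g0 (g⁻¹ ζ)
        rw [Equiv.Perm.apply_inv_self] at h1
        exact h1.symm
      · intro ζ hζ0 k
        have hζ'0 : g⁻¹ ζ 0 = (d : ZMod d) - 1 := by
          have h1 := g0 (g⁻¹ ζ)
          rw [Equiv.Perm.apply_inv_self] at h1
          rw [← h1, hζ0]
        have h2 : ∀ k', ζ (k' + 1) = x (tl (g⁻¹ ζ)) k' := by
          intro k'
          have h3 := gs (g⁻¹ ζ) hζ'0 k'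
          rw [Equiv.Perm.apply_inv_self] at h3
          exact h3
        have h4 : tl ζ = x (tl (g⁻¹ ζ)) := funext (fun k' => h2 k')
        have h5 : x⁻¹ (tl ζ) = tl (g⁻¹ ζ) := by
          rw [h4, Equiv.Perm.inv_apply_self]
        rw [h5]
        rfl

def KeyFact (d m : ℕ) (ω : W d m) (ξ η : Bd d) : Prop :=
  ∀ g : Equiv.Perm (Bd d), g ∈ spinalGroup d m ω → (g ξ = ξ ↔ g η = η)

lemma keyfact_symm {ω : W d m} {ξ η : Bd d} (KF : KeyFact d m ω ξ η) :
    KeyFact d m ω η ξ := fun g hg => (KF g hg).symm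

lemma keyfact_conj {ω : W d m} {ξ η : Bd d} (KF : KeyFact d m ω ξ η)
    {π : Equiv.Perm (Bd d)} (hπ : π ∈ spinalGroup d m ω) :
    KeyFact d m ω (π ξ) (π η) := by
  intro g hg
  have h1 : ∀ ζ : Bd d, g (π ζ) = π ζ ↔ (π⁻¹ * g * π) ζ = ζ := by
    intro ζ
    rw [Equiv.Perm.mul_apply, Equiv.Perm.mul_apply]
    constructor
    · intro he; rw [he]; exact Equiv.Perm.inv_apply_self π ζ
    · intro he
      have h2 := congrArg π he
      rwa [Equiv.Perm.apply_inv_self] at h2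
  rw [h1 ξ, h1 η]
  exact KF _ (mul_mem (mul_mem (inv_mem hπ) hg) hπ)

lemma keyfact_shift_aux (hd : 2 ≤ d) {ω : W d m} (hsurj : Function.Surjective (ω 0))
    {ξ η : Bd d} (h00 : ξ 0 = η 0) (KF : KeyFact d m ω ξ η)
    {h : Equiv.Perm (Bd d)} (hh : h ∈ spinalGroup d m (sh ω))
    (hfix : h (tl ξ) = tl ξ) : h (tl η) = tl η := by
  haveI : NeZero d := ⟨by omega⟩
  set t := ((d : ZMod d) - 1 - ξ 0).val with ht
  have hcast : ((t : ℕ) : ZMod d) = (d : ZMod d) - 1 - ξ 0 := val_cast' hd _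
  set π := aPerm d hd ^ t with hπdef
  have hπmem : π ∈ spinalGroup d m ω := aPow_mem hd ω t
  have happ : ∀ ζ : Bd d, π ζ = (aMap d)^[t] ζ := fun ζ => aPow_apply hd t ζ
  have hπξ0 : π ξ 0 = (d : ZMod d) - 1 := by
    rw [happ, aIter_zero, hcast]; ring
  have hπη0 : π η 0 = (d : ZMod d) - 1 := by
    rw [happ, aIter_zero, hcast, ← h00]; ring
  have htlξ : tl (π ξ) = tl ξ := funext (fun k => by
    show π ξ (k + 1) = ξ (k + 1)
    rw [happ, aIter_succ])
  have htlη : tl (π η) = tl η := funext (fun k => by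
    show π η (k + 1) = η (k + 1)
    rw [happ, aIter_succ])
  obtain ⟨g, gmem, g0, gs⟩ := lift_lemma hd ω hsurj hh
  have KF' := keyfact_conj KF hπmem
  have hfixπ : g (π ξ) = π ξ := by
    funext n
    cases n with
    | zero => rw [g0]
    | succ k =>
        rw [gs (π ξ) hπξ0 k, htlξ, hfix]
        exact (congrFun htlξ k).symm
  have hfixη : g (π η) = π η := (KF' g gmem).mp hfixπ
  funext k
  have h1 := gs (π η) hπη0 k
  rw [hfixη, htlη] at h1
  rw [← h1]
  exact congrFun htlη k

lemma keyfact_shift (hd : 2 ≤ d) {ω : W d m} (hsurj : Function.Surjective (ω 0))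
    {ξ η : Bd d} (h00 : ξ 0 = η 0) (KF : KeyFact d m ω ξ η) :
    KeyFact d m (sh ω) (tl ξ) (tl η) := by
  intro h hh
  constructor
  · exact keyfact_shift_aux hd hsurj h00 KF hh
  · exact keyfact_shift_aux hd hsurj h00.symm (keyfact_symm KF) hh

lemma reach (hd : 2 ≤ d) : ∀ (n : ℕ) (ω : W d m), (∀ k, Function.Surjective (ω k)) →
    ∀ ζ u : Bd d, ∃ π, π ∈ spinalGroup d m ω ∧ ∀ i, i < n → π ζ i = u i := by
  intro n
  induction n with
  | zero => exact fun ω _ ζ u => ⟨1, one_mem _, fun i hi => absurd hi (by omega)⟩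
  | succ n IH =>
    intro ω hs ζ u
    haveI : NeZero d := ⟨by omega⟩
    obtain ⟨h, hmem, hpre⟩ := IH (sh ω) (fun k => hs (k + 1)) (tl ζ) (tl u)
    obtain ⟨g, gmem, g0, gsec⟩ := lift_lemma hd ω (hs 0) hmem
    set t₁ := ((d : ZMod d) - 1 - ζ 0).val with ht₁
    set t₂ := (u 0 - ((d : ZMod d) - 1)).val with ht₂
    have hc1 : ((t₁ : ℕ) : ZMod d) = (d : ZMod d) - 1 - ζ 0 := val_cast' hd _
    have hc2 : ((t₂ : ℕ) : ZMod d) = u 0 - ((d : ZMod d) - 1) := val_cast' hd _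
    refine ⟨aPerm d hd ^ t₂ * g * aPerm d hd ^ t₁,
      mul_mem (mul_mem (aPow_mem hd ω t₂) gmem) (aPow_mem hd ω t₁), ?_⟩
    have hζ₁0 : (aPerm d hd ^ t₁) ζ 0 = (d : ZMod d) - 1 := by
      rw [aPow_apply, aIter_zero, hc1]; ring
    have hζ₁s : ∀ k, (aPerm d hd ^ t₁) ζ (k + 1) = ζ (k + 1) := by
      intro k; rw [aPow_apply, aIter_succ]
    have htl₁ : tl ((aPerm d hd ^ t₁) ζ) = tl ζ := funext (fun k => hζ₁s k)
    intro i hi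
    rw [Equiv.Perm.mul_apply, Equiv.Perm.mul_apply]
    cases i with
    | zero =>
        rw [aPow_apply, aIter_zero, g0, hζ₁0, hc2]; ring
    | succ i' =>
        rw [aPow_apply, aIter_succ, gsec _ hζ₁0 i', htl₁, hpre i' (by omega)]
        rfl

lemma bMap_fix_inactive (hd : 2 ≤ d) (ω : W d m) (b) {ζ : Bd d}
    (h0 : ζ 0 ≠ 0) (h1 : ζ 0 ≠ (d : ZMod d) - 1) : bMap d m ω b ζ = ζ := by
  funext n
  cases n with
  | zero => exact bMap_zero_apply ω b ζ
  | succ k =>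
      rw [bMap_succ_apply]
      have hns : ¬ Spine d ζ k := by
        intro hs
        cases k with
        | zero => exact h0 hs.2
        | succ k' => exact h1 (hs.1 0 (by omega))
      rw [if_neg hns]

lemma bMap_fix_zero (hd : 2 ≤ d) (ω : W d m) {b} (hb : ω 0 b = 0) {ζ : Bd d}
    (h0 : ζ 0 = 0) : bMap d m ω b ζ = ζ := by
  funext n
  cases n with
  | zero => exact bMap_zero_apply ω b ζ
  | succ k =>
      rw [bMap_succ_apply]
      cases k with
      | zero =>
          by_cases hs : Spine d ζ 0
          · rw [if_pos hs, hb, add_zero]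
          · rw [if_neg hs]
      | succ k' =>
          have hns : ¬ Spine d ζ (k' + 1) := by
            intro hs
            have h1 := hs.1 0 (by omega)
            rw [h0] at h1
            exact neg_one_ne_zero' hd h1.symm
          rw [if_neg hns]

lemma bMap_moves (hd : 2 ≤ d) (ω : W d m) {b} {ζ : Bd d} (r : ℕ)
    (hpre : ∀ i, i < r → ζ i = (d : ZMod d) - 1) (h0 : ζ r = 0) (hb : ω r b ≠ 0) :
    bMap d m ω b ζ ≠ ζ := by
  intro he
  have h1 := congrFun he (r + 1)
  rw [bMap_succ_apply, if_pos ⟨hpre, h0⟩] at h1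
  exact hb (by
    have h2 := h1
    rw [add_eq_left] at h2
    exact h2)

lemma InOmega_sh {ω : W d m} (hω : InOmega d m ω) : InOmega d m (sh ω) := by
  constructor
  · exact fun n => hω.1 (n + 1)
  · intro i b hb
    apply hω.2 (i + 1) b
    intro j hj
    have h1 : j - 1 + 1 = j := by omega
    rw [← h1]
    exact hb (j - 1) (by omega)

lemma base_case (hd : 2 ≤ d) (hm : 1 ≤ m) (hdm : ¬(d = 2 ∧ m = 1)) (ω : W d m)
    (hω : InOmega d m ω) (ξ η : Bd d) (hdiff : ξ 0 ≠ η 0)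
    (KF : KeyFact d m ω ξ η) : False := by
  haveI : NeZero d := ⟨by omega⟩
  haveI : Fact (1 < d) := ⟨by omega⟩
  set t := (- η 0).val with htdef
  have hcast : ((t : ℕ) : ZMod d) = - η 0 := val_cast' hd _
  set π₀ := aPerm d hd ^ t with hπ₀def
  have hπ₀mem : π₀ ∈ spinalGroup d m ω := aPow_mem hd ω t
  set ξ' := π₀ ξ with hξ'def
  set η' := π₀ η with hη'def
  set δ := ξ 0 - η 0 with hδdef
  have hξ'0 : ξ' 0 = δ := by
    rw [hξ'def, aPow_apply, aIter_zero, hcast, hδdef]; ring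
  have hη'0 : η' 0 = 0 := by
    rw [hη'def, aPow_apply, aIter_zero, hcast]; ring
  have KF' : KeyFact d m ω ξ' η' := keyfact_conj KF hπ₀mem
  obtain ⟨y1, hy1⟩ := hω.1 0 1
  have hy1ne : ω 0 y1 ≠ 0 := by rw [hy1]; exact one_ne_zero
  have hδ0 : δ ≠ 0 := sub_ne_zero.mpr hdiff
  by_cases hδ1 : δ ≠ (d : ZMod d) - 1
  · -- CASE A
    have hfix : bPerm hd ω y1 ξ' = ξ' :=
      bMap_fix_inactive hd ω y1 (by rw [hξ'0]; exact hδ0) (by rw [hξ'0]; exact hδ1)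
    have hmove : bMap d m ω y1 η' ≠ η' :=
      bMap_moves hd ω 0 (fun i hi => absurd hi (by omega)) hη'0 hy1ne
    exact hmove ((KF' _ (bPerm_mem hd ω y1)).mp hfix)
  · push_neg at hδ1
    by_cases h1d : (1 : ZMod d) = (d : ZMod d) - 1
    · -- CASE C : d = 2
      have hm2 : 2 ≤ m := by
        rcases Nat.lt_or_ge m 2 with hmlt | hmge
        · exfalso
          have hmeq : m = 1 := by omega
          have hd2 : d = 2 := by
            have h2z : ((2 : ℕ) : ZMod d) = 0 := by
              push_cast
              have h11 : (1 : ZMod d) + 1 = 0 := by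
                nth_rewrite 1 [h1d]
                rw [sub_add_cancel, ZMod.natCast_self]
              rw [show (2 : ZMod d) = 1 + 1 from by norm_num, h11]
            have hdvd : d ∣ 2 := (ZMod.natCast_eq_zero_iff 2 d).mp h2z
            have := Nat.le_of_dvd (by norm_num) hdvd
            omega
          exact hdm ⟨hd2, hmeq⟩
        · exact hmge
      -- nontrivial kernel element
      have hker : ∃ y : Fin m → ZMod d, y ≠ 0 ∧ ω 0 y = 0 := by
        by_contra hcon
        push_neg at hcon
        have hinj : Function.Injective (ω 0) := by
          intro x y hxy
          by_contra hne
          exact hcon (x - y) (sub_ne_zero.mpr hne) (by rw [map_sub, hxy, sub_self])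
        have hcard := Fintype.card_le_of_injective _ hinj
        rw [ZMod.card, Fintype.card_fun, ZMod.card, Fintype.card_fin] at hcard
        have h2m : d ^ 2 ≤ d ^ m := Nat.pow_le_pow_right (by omega) hm2
        have hdd : d * d ≤ d := le_trans (by rw [← pow_two]; exact h2m) hcard
        nlinarith
      obtain ⟨y0, hy0ne, hy0⟩ := hker
      have hex : ∃ r, ω r y0 ≠ 0 := by
        by_contra hcon
        push_neg at hcon
        exact hy0ne (hω.2 0 y0 (fun j _ => hcon j))
      obtain ⟨r, hr⟩ := hex
      have hr1 : 1 ≤ r := by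
        rcases Nat.eq_zero_or_pos r with h0 | h0
        · exact absurd (h0 ▸ hy0) hr
        · omega
      set u : Bd d := fun i => if i = r then 0 else (d : ZMod d) - 1 with hu
      obtain ⟨π, hπm, hπ⟩ := reach hd (r + 1) ω hω.1 ξ' u
      set p := π ξ' with hpdef
      set q := π η' with hqdef
      have hpr : p r = 0 := by rw [hπ r (by omega)]; simp [hu]
      have hppre : ∀ i, i < r → p i = (d : ZMod d) - 1 := by
        intro i hi
        rw [hπ i (by omega), hu]
        simp only
        rw [if_neg (by omega)]
      have hp0 : p 0 = (d : ZMod d) - 1 := hppre 0 (by omega)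
      obtain ⟨c, hc⟩ := coord0 hd ω hπm
      have hc0 : c = 0 := by
        have h1 := hc ξ'
        rw [hξ'0, hδ1] at h1
        have h2 : (d : ZMod d) - 1 = (d : ZMod d) - 1 + c := by rw [← h1]; exact hp0.symm
        exact (left_eq_add.mp h2)
      have hq0 : q 0 = 0 := by
        have h1 := hc η'
        rw [hη'0, hc0, add_zero] at h1
        exact h1
      have KFpq := keyfact_conj KF' hπm
      have hfix : bPerm hd ω y0 q = q := bMap_fix_zero hd ω hy0 hq0
      have hmove : bMap d m ω y0 p ≠ p := bMap_moves hd ω r hppre hpr hr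
      exact hmove ((KFpq _ (bPerm_mem hd ω y0)).mpr hfix)
    · -- CASE B
      have KF'' : KeyFact d m ω (aPerm d hd ξ') (aPerm d hd η') :=
        keyfact_conj KF' (aPerm_mem hd ω)
      have hξ''0 : aPerm d hd ξ' 0 = 0 := by
        show aMap d ξ' 0 = 0
        rw [aMap_zero, hξ'0, hδ1, sub_add_cancel, ZMod.natCast_self]
      have hη''0 : aPerm d hd η' 0 = 1 := by
        show aMap d η' 0 = 1
        rw [aMap_zero, hη'0, zero_add]
      have hfix : bPerm hd ω y1 (aPerm d hd η') = aPerm d hd η' :=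
        bMap_fix_inactive hd ω y1 (by rw [hη''0]; exact one_ne_zero)
          (by rw [hη''0]; exact h1d)
      have hmove : bMap d m ω y1 (aPerm d hd ξ') ≠ aPerm d hd ξ' :=
        bMap_moves hd ω 0 (fun i hi => absurd hi (by omega)) hξ''0 hy1ne
      exact hmove ((KF'' _ (bPerm_mem hd ω y1)).mpr hfix)

lemma main_aux (hd : 2 ≤ d) (hm : 1 ≤ m) (hdm : ¬(d = 2 ∧ m = 1)) :
    ∀ (n : ℕ) (ω : W d m), InOmega d m ω → ∀ ξ η : Bd d,
      (∀ i, i < n → ξ i = η i) → ξ n ≠ η n → KeyFact d m ω ξ η → False := by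
  intro n
  induction n with
  | zero =>
      intro ω hω ξ η _ hdiff KF
      exact base_case hd hm hdm ω hω ξ η hdiff KF
  | succ n IH =>
      intro ω hω ξ η hpre hdiff KF
      exact IH (sh ω) (InOmega_sh hω) (tl ξ) (tl η)
        (fun i hi => hpre (i + 1) (by omega)) hdiff
        (keyfact_shift hd (hω.1 0) (hpre 0 (by omega)) KF)

end SpinalAux

/-- for `(d, m) ≠ (2, 1)` and `ω ∈ Ω_{d,m}`, distinct boundary points have
distinct stabilizers in the spinal group `G_ω`; equivalently, the map sending a boundary
point to its rooted, directed, labeled Schreier graph is injective. -/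
theorem stabilizers_distinct (d m : ℕ) (hd : 2 ≤ d) (hm : 1 ≤ m)
    (hdm : ¬(d = 2 ∧ m = 1))
    (ω : ℕ → ((Fin m → ZMod d) →+ ZMod d)) (hω : InOmega d m ω)
    (ξ η : Bd d) (hne : ξ ≠ η) :
    MulAction.stabilizer (spinalGroup d m ω) ξ ≠
      MulAction.stabilizer (spinalGroup d m ω) η := by
  intro hEq
  have KF : SpinalAux.KeyFact d m ω ξ η := by
    intro g hg
    have hmem : ∀ ζ : Bd d,
        ((⟨g, hg⟩ : spinalGroup d m ω) ∈ MulAction.stabilizer (spinalGroup d m ω) ζ)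
          ↔ g ζ = ζ := by
      intro ζ
      rw [MulAction.mem_stabilizer_iff]
      rfl
    rw [← hmem ξ, ← hmem η, hEq]
  classical
  have hex : ∃ n, ξ n ≠ η n := by
    by_contra hcon
    push_neg at hcon
    exact hne (funext hcon)
  exact SpinalAux.main_aux hd hm hdm (Nat.find hex) ω hω ξ η
    (fun i hi => not_not.mp (Nat.find_min hex hi)) (Nat.find_spec hex) KF

end
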